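/- Fix u_m > 0. The PWM-induced probing signal s₀(u,σ) := u_m − u + u_m·sgn(u − u_m − 4w(σ)) + u_m·sgn(u − u_m + 4w(σ)), with w(σ) := u_m·fract(σ + 1/2) − u_m/2, is Lipschitz in its first argument in the L¹-in-σ sense: for all u, u' ∈ [−u_m, u_m], ∫₀¹ |s₀(u,σ) − s₀(u',σ)| dσ ≤ 2|u − u'|. -/

import Mathlib

open MeasureTheory Set

lemma pwm_measurable_sign : Measurable Real.sign := by
  unfold Real.sign
  exact Measurable.ite (measurableSet_lt measurable_id measurable_const) measurable_const
    (Measurable.ite (measurableSet_lt measurable_const measurable_id) measurable_const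
      measurable_const)

lemma pwm_abs_sign_le (x : ℝ) : |Real.sign x| ≤ 1 := by
  rcases Real.sign_apply_eq x with h | h | h <;> rw [h] <;> norm_num

lemma pwm_mul_sign_bounds (u_m x : ℝ) (h : 0 ≤ u_m) :
    -u_m ≤ u_m * Real.sign x ∧ u_m * Real.sign x ≤ u_m := by
  have h1 := abs_le.1 (pwm_abs_sign_le x)
  constructor <;> nlinarith [h1.1, h1.2]

set_option maxHeartbeats 1600000 in
lemma pwm_aux
    (u_m : ℝ) (hum : 0 < u_m)
    (w : ℝ → ℝ) (hw : ∀ σ : ℝ, w σ = u_m * Int.fract (σ + 1/2) - u_m/2)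
    (s₀ : ℝ → ℝ → ℝ)
    (hs₀ : ∀ v σ : ℝ, s₀ v σ =
      u_m - v + u_m * Real.sign (v - u_m - 4 * w σ) + u_m * Real.sign (v - u_m + 4 * w σ))
    (u u' : ℝ) (hu : u ∈ Set.Icc (-u_m) u_m) (hu' : u' ∈ Set.Icc (-u_m) u_m)
    (hle : u' ≤ u) :
    (∫ σ in (0:ℝ)..1, |s₀ u σ - s₀ u' σ|) ≤ 2 * (u - u') := by
  obtain ⟨hu1, hu2⟩ := hu
  obtain ⟨hu'1, hu'2⟩ := hu'
  have h4 : (0:ℝ) < 4 * u_m := by linarith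
  set a1 : ℝ := (u' + u_m)/(4*u_m) + 1/2 with ha1
  set b1 : ℝ := (u + u_m)/(4*u_m) + 1/2 with hb1
  set a2 : ℝ := (3*u_m - u)/(4*u_m) - 1/2 with ha2
  set b2 : ℝ := (3*u_m - u')/(4*u_m) - 1/2 with hb2
  have hab1 : a1 ≤ b1 := by
    have : (u' + u_m)/(4*u_m) ≤ (u + u_m)/(4*u_m) := by gcongr
    rw [ha1, hb1]; linarith
  have hab2 : a2 ≤ b2 := by
    have : (3*u_m - u)/(4*u_m) ≤ (3*u_m - u')/(4*u_m) := by gcongr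
    rw [ha2, hb2]; linarith
  set g : ℝ → ℝ := fun σ => (u - u') + (Set.Icc a1 b1).indicator (fun _ => 2*u_m) σ
      + (Set.Icc a2 b2).indicator (fun _ => 2*u_m) σ with hg
  -- key pointwise bound on (0,1)
  have key : ∀ σ ∈ Set.Ioo (0:ℝ) 1, |s₀ u σ - s₀ u' σ| ≤ g σ := by
    intro σ hσ
    obtain ⟨hσ0, hσ1⟩ := hσ
    set t : ℝ := Int.fract (σ + 1/2) with htdef
    have hwσ : w σ = u_m * t - u_m/2 := hw σ
    have hbr : (1/2 < t ∧ t = σ + 1/2) ∨ (t < 1/2 ∧ t = σ - 1/2) := by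
      rcases lt_or_ge σ (1/2) with h | h
      · left
        have hfr : Int.fract (σ + 1/2) = σ + 1/2 :=
          Int.fract_eq_self.2 ⟨by linarith, by linarith⟩
        rw [htdef, hfr]
        exact ⟨by linarith, rfl⟩
      · right
        have he : σ + 1/2 = (σ - 1/2) + ((1:ℤ) : ℝ) := by push_cast; ring
        have hfr : Int.fract (σ + 1/2) = σ - 1/2 := by
          rw [he, Int.fract_add_intCast, Int.fract_eq_self.2 ⟨by linarith, by linarith⟩]
        rw [htdef, hfr]
        exact ⟨by linarith, rfl⟩
    have claim1 : u_m * |Real.sign (u - u_m - 4 * w σ) - Real.sign (u' - u_m - 4 * w σ)|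
        ≤ (Set.Icc a1 b1).indicator (fun _ => 2*u_m) σ := by
      set c : ℝ := 4 * u_m * t - u_m with hc
      have hcu : ∀ v : ℝ, v - u_m - 4 * w σ = v - c := by intro v; rw [hwσ, hc]; ring
      rw [hcu u, hcu u']
      by_cases hmem : u' ≤ c ∧ c ≤ u
      · obtain ⟨hm1, hm2⟩ := hmem
        rw [hc] at hm1 hm2
        have ht2 : t = σ - 1/2 := by
          rcases hbr with ⟨h1, _⟩ | ⟨_, h2⟩
          · exfalso
            have := mul_pos hum (show (0:ℝ) < t - 1/2 by linarith)
            linarith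
          · exact h2
        have hσmem : σ ∈ Set.Icc a1 b1 := by
          constructor
          · rw [ha1]
            have h5 : (u' + u_m)/(4*u_m) ≤ t := (div_le_iff₀ h4).2 (by linarith)
            rw [ht2] at h5; linarith
          · rw [hb1]
            have h5 : t ≤ (u + u_m)/(4*u_m) := (le_div_iff₀ h4).2 (by linarith)
            rw [ht2] at h5; linarith
        rw [Set.indicator_of_mem hσmem]
        have habs : |Real.sign (u - c) - Real.sign (u' - c)| ≤ 2 := by
          calc |Real.sign (u - c) - Real.sign (u' - c)|
              ≤ |Real.sign (u - c)| + |Real.sign (u' - c)| := abs_sub _ _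
            _ ≤ 2 := by linarith [pwm_abs_sign_le (u - c), pwm_abs_sign_le (u' - c)]
        have := mul_le_mul_of_nonneg_left habs hum.le
        linarith
      · push_neg at hmem
        have heq : Real.sign (u - c) = Real.sign (u' - c) := by
          rcases lt_or_ge c u' with h | h
          · rw [Real.sign_of_pos (by linarith : (0:ℝ) < u - c),
              Real.sign_of_pos (by linarith : (0:ℝ) < u' - c)]
          · have hcu2 := hmem h
            rw [Real.sign_of_neg (by linarith : u - c < 0),
              Real.sign_of_neg (by linarith : u' - c < 0)]
        rw [heq, sub_self, abs_zero, mul_zero]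
        exact Set.indicator_nonneg (fun _ _ => by linarith) σ
    have claim2 : u_m * |Real.sign (u - u_m + 4 * w σ) - Real.sign (u' - u_m + 4 * w σ)|
        ≤ (Set.Icc a2 b2).indicator (fun _ => 2*u_m) σ := by
      set c : ℝ := 3 * u_m - 4 * u_m * t with hc
      have hcu : ∀ v : ℝ, v - u_m + 4 * w σ = v - c := by intro v; rw [hwσ, hc]; ring
      rw [hcu u, hcu u']
      by_cases hmem : u' ≤ c ∧ c ≤ u
      · obtain ⟨hm1, hm2⟩ := hmem
        rw [hc] at hm1 hm2
        have ht2 : t = σ + 1/2 := by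
          rcases hbr with ⟨_, h1⟩ | ⟨h2, _⟩
          · exact h1
          · exfalso
            have := mul_pos hum (show (0:ℝ) < 1/2 - t by linarith)
            linarith
        have hσmem : σ ∈ Set.Icc a2 b2 := by
          constructor
          · rw [ha2]
            have h5 : (3*u_m - u)/(4*u_m) ≤ t := (div_le_iff₀ h4).2 (by linarith)
            rw [ht2] at h5; linarith
          · rw [hb2]
            have h5 : t ≤ (3*u_m - u')/(4*u_m) := (le_div_iff₀ h4).2 (by linarith)
            rw [ht2] at h5; linarith
        rw [Set.indicator_of_mem hσmem]
        have habs : |Real.sign (u - c) - Real.sign (u' - c)| ≤ 2 := by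
          calc |Real.sign (u - c) - Real.sign (u' - c)|
              ≤ |Real.sign (u - c)| + |Real.sign (u' - c)| := abs_sub _ _
            _ ≤ 2 := by linarith [pwm_abs_sign_le (u - c), pwm_abs_sign_le (u' - c)]
        have := mul_le_mul_of_nonneg_left habs hum.le
        linarith
      · push_neg at hmem
        have heq : Real.sign (u - c) = Real.sign (u' - c) := by
          rcases lt_or_ge c u' with h | h
          · rw [Real.sign_of_pos (by linarith : (0:ℝ) < u - c),
              Real.sign_of_pos (by linarith : (0:ℝ) < u' - c)]
          · have hcu2 := hmem h
            rw [Real.sign_of_neg (by linarith : u - c < 0),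
              Real.sign_of_neg (by linarith : u' - c < 0)]
        rw [heq, sub_self, abs_zero, mul_zero]
        exact Set.indicator_nonneg (fun _ _ => by linarith) σ
    have hdiff : s₀ u σ - s₀ u' σ = (u' - u)
        + (u_m * Real.sign (u - u_m - 4 * w σ) - u_m * Real.sign (u' - u_m - 4 * w σ))
        + (u_m * Real.sign (u - u_m + 4 * w σ) - u_m * Real.sign (u' - u_m + 4 * w σ)) := by
      rw [hs₀, hs₀]; ring
    calc |s₀ u σ - s₀ u' σ|
        ≤ |u' - u|
          + |u_m * Real.sign (u - u_m - 4 * w σ) - u_m * Real.sign (u' - u_m - 4 * w σ)|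
          + |u_m * Real.sign (u - u_m + 4 * w σ) - u_m * Real.sign (u' - u_m + 4 * w σ)| := by
          rw [hdiff]; exact abs_add_three _ _ _
      _ ≤ (u - u') + (Set.Icc a1 b1).indicator (fun _ => 2*u_m) σ
          + (Set.Icc a2 b2).indicator (fun _ => 2*u_m) σ := by
          have e1 : |u' - u| = u - u' := by
            rw [abs_sub_comm, abs_of_nonneg (by linarith : (0:ℝ) ≤ u - u')]
          have e2 : |u_m * Real.sign (u - u_m - 4 * w σ)
              - u_m * Real.sign (u' - u_m - 4 * w σ)|
              = u_m * |Real.sign (u - u_m - 4 * w σ) - Real.sign (u' - u_m - 4 * w σ)| := by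
            rw [← mul_sub, abs_mul, abs_of_pos hum]
          have e3 : |u_m * Real.sign (u - u_m + 4 * w σ)
              - u_m * Real.sign (u' - u_m + 4 * w σ)|
              = u_m * |Real.sign (u - u_m + 4 * w σ) - Real.sign (u' - u_m + 4 * w σ)| := by
            rw [← mul_sub, abs_mul, abs_of_pos hum]
          rw [e1, e2, e3]
          exact add_le_add (add_le_add le_rfl claim1) claim2
      _ = g σ := rfl
  -- measurability / integrability
  have hmw : Measurable w := by
    have : w = fun σ => u_m * Int.fract (σ + 1/2) - u_m/2 := funext hw
    rw [this]
    exact (measurable_const.mul (measurable_id.add_const _).fract).sub measurable_const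
  have hms : ∀ v : ℝ, Measurable (fun σ => s₀ v σ) := by
    intro v
    have : (fun σ => s₀ v σ) = fun σ => u_m - v
        + u_m * Real.sign (v - u_m - 4 * w σ) + u_m * Real.sign (v - u_m + 4 * w σ) :=
      funext (hs₀ v)
    rw [this]
    have hinner1 : Measurable fun σ => v - u_m - 4 * w σ :=
      measurable_const.sub (measurable_const.mul hmw)
    have hinner2 : Measurable fun σ => v - u_m + 4 * w σ :=
      measurable_const.add (measurable_const.mul hmw)
    exact (measurable_const.add
        (measurable_const.mul (pwm_measurable_sign.comp hinner1))).add
      (measurable_const.mul (pwm_measurable_sign.comp hinner2))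
  have hmf : Measurable fun σ => |s₀ u σ - s₀ u' σ| := ((hms u).sub (hms u')).abs
  have hf_int : IntegrableOn (fun σ => |s₀ u σ - s₀ u' σ|) (Set.Ioo 0 1) volume := by
    apply Measure.integrableOn_of_bounded (M := (u - u') + 4*u_m) measure_Ioo_lt_top.ne
      hmf.aestronglyMeasurable
    filter_upwards with σ
    rw [Real.norm_eq_abs, abs_abs, hs₀, hs₀]
    obtain ⟨c1, c2⟩ := pwm_mul_sign_bounds u_m (u - u_m - 4 * w σ) hum.le
    obtain ⟨c3, c4⟩ := pwm_mul_sign_bounds u_m (u - u_m + 4 * w σ) hum.le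
    obtain ⟨c5, c6⟩ := pwm_mul_sign_bounds u_m (u' - u_m - 4 * w σ) hum.le
    obtain ⟨c7, c8⟩ := pwm_mul_sign_bounds u_m (u' - u_m + 4 * w σ) hum.le
    rw [abs_le]
    constructor <;> linarith
  have hi1 : IntegrableOn ((Set.Icc a1 b1).indicator (fun _ => 2*u_m)) (Set.Ioo (0:ℝ) 1)
      volume :=
    ((integrable_indicator_iff measurableSet_Icc).2
      (integrableOn_const measure_Icc_lt_top.ne)).integrableOn
  have hi2 : IntegrableOn ((Set.Icc a2 b2).indicator (fun _ => 2*u_m)) (Set.Ioo (0:ℝ) 1)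
      volume :=
    ((integrable_indicator_iff measurableSet_Icc).2
      (integrableOn_const measure_Icc_lt_top.ne)).integrableOn
  have hi0 : IntegrableOn (fun _ : ℝ => u - u') (Set.Ioo (0:ℝ) 1) volume :=
    integrableOn_const measure_Ioo_lt_top.ne
  have hg_int : IntegrableOn g (Set.Ioo (0:ℝ) 1) volume := (hi0.add hi1).add hi2
  -- rewrite the interval integral as a set integral over Ioo
  rw [intervalIntegral.integral_of_le (by norm_num : (0:ℝ) ≤ 1),
    MeasureTheory.setIntegral_congr_set Ioo_ae_eq_Ioc.symm]
  have step1 : (∫ σ in Set.Ioo (0:ℝ) 1, |s₀ u σ - s₀ u' σ|) ≤ ∫ σ in Set.Ioo (0:ℝ) 1, g σ :=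
    setIntegral_mono_on hf_int hg_int measurableSet_Ioo key
  have split : (∫ σ in Set.Ioo (0:ℝ) 1, g σ)
      = (∫ _σ in Set.Ioo (0:ℝ) 1, (u - u'))
        + (∫ σ in Set.Ioo (0:ℝ) 1, (Set.Icc a1 b1).indicator (fun _ => 2*u_m) σ)
        + ∫ σ in Set.Ioo (0:ℝ) 1, (Set.Icc a2 b2).indicator (fun _ => 2*u_m) σ := by
    have e1 := integral_add (μ := volume.restrict (Set.Ioo (0:ℝ) 1)) (hi0.add hi1) hi2
    have e2 := integral_add (μ := volume.restrict (Set.Ioo (0:ℝ) 1)) hi0 hi1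
    simp only [Pi.add_apply] at e1 e2
    simp only [hg]
    rw [e1, e2]
  have t0 : (∫ _σ in Set.Ioo (0:ℝ) 1, (u - u')) = u - u' := by
    rw [setIntegral_const, Real.volume_real_Ioo]
    norm_num
  have t1 : (∫ σ in Set.Ioo (0:ℝ) 1, (Set.Icc a1 b1).indicator (fun _ => 2*u_m) σ)
      ≤ 2*u_m * (b1 - a1) := by
    rw [setIntegral_indicator measurableSet_Icc, setIntegral_const, smul_eq_mul, measureReal_def]
    have hv : (volume (Set.Ioo (0:ℝ) 1 ∩ Set.Icc a1 b1)).toReal ≤ b1 - a1 := by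
      have hm : volume (Set.Ioo (0:ℝ) 1 ∩ Set.Icc a1 b1) ≤ ENNReal.ofReal (b1 - a1) := by
        rw [← Real.volume_Icc]
        exact measure_mono Set.inter_subset_right
      exact ENNReal.toReal_le_of_le_ofReal (by linarith) hm
    nlinarith [ENNReal.toReal_nonneg (a := volume (Set.Ioo (0:ℝ) 1 ∩ Set.Icc a1 b1))]
  have t2 : (∫ σ in Set.Ioo (0:ℝ) 1, (Set.Icc a2 b2).indicator (fun _ => 2*u_m) σ)
      ≤ 2*u_m * (b2 - a2) := by
    rw [setIntegral_indicator measurableSet_Icc, setIntegral_const, smul_eq_mul, measureReal_def]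
    have hv : (volume (Set.Ioo (0:ℝ) 1 ∩ Set.Icc a2 b2)).toReal ≤ b2 - a2 := by
      have hm : volume (Set.Ioo (0:ℝ) 1 ∩ Set.Icc a2 b2) ≤ ENNReal.ofReal (b2 - a2) := by
        rw [← Real.volume_Icc]
        exact measure_mono Set.inter_subset_right
      exact ENNReal.toReal_le_of_le_ofReal (by linarith) hm
    nlinarith [ENNReal.toReal_nonneg (a := volume (Set.Ioo (0:ℝ) 1 ∩ Set.Icc a2 b2))]
  have len1 : 2*u_m * (b1 - a1) = (u - u')/2 := by
    rw [hb1, ha1]; field_simp; ring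
  have len2 : 2*u_m * (b2 - a2) = (u - u')/2 := by
    rw [hb2, ha2]; field_simp; ring
  calc (∫ σ in Set.Ioo (0:ℝ) 1, |s₀ u σ - s₀ u' σ|) ≤ ∫ σ in Set.Ioo (0:ℝ) 1, g σ := step1
    _ ≤ (u - u') + 2*u_m * (b1 - a1) + 2*u_m * (b2 - a2) := by
        rw [split]; exact add_le_add (add_le_add t0.le t1) t2
    _ = 2 * (u - u') := by rw [len1, len2]; ring

/-- the PWM probing signal `s₀` is Lipschitz in its first
argument in the `L¹`-in-`σ` sense, with constant `2`. -/
theorem pwm_s0_L1_lipschitz_first_argument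
    (u_m : ℝ) (hum : 0 < u_m)
    (w : ℝ → ℝ) (hw : ∀ σ : ℝ, w σ = u_m * Int.fract (σ + 1/2) - u_m/2)
    (s₀ : ℝ → ℝ → ℝ)
    (hs₀ : ∀ v σ : ℝ, s₀ v σ =
      u_m - v + u_m * Real.sign (v - u_m - 4 * w σ) + u_m * Real.sign (v - u_m + 4 * w σ)) :
    ∀ u ∈ Set.Icc (-u_m) u_m, ∀ u' ∈ Set.Icc (-u_m) u_m,
      (∫ σ in (0:ℝ)..1, |s₀ u σ - s₀ u' σ|) ≤ 2 * |u - u'| := by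
  intro u hu u' hu'
  rcases le_total u' u with h | h
  · rw [abs_of_nonneg (sub_nonneg.2 h)]
    exact pwm_aux u_m hum w hw s₀ hs₀ u u' hu hu' h
  · have hsym : (∫ σ in (0:ℝ)..1, |s₀ u σ - s₀ u' σ|)
        = ∫ σ in (0:ℝ)..1, |s₀ u' σ - s₀ u σ| := by
      simp only [abs_sub_comm]
    rw [hsym, abs_sub_comm, abs_of_nonneg (sub_nonneg.2 h)]
    exact pwm_aux u_m hum w hw s₀ hs₀ u' u hu' hu h
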